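/- Let n ≥ 1, let Ω ⊆ ℝⁿ be open, and let u : Ω → ℝ be a C² solution of the n-dimensional minimal surface equation (1 + |∇u|²)·Δu − Σ_{i,j} uᵢuⱼ·∂²u/∂xⁱ∂xʲ = 0 on Ω, where uᵢ = ∂u/∂xⁱ and W = √(1 + |∇u|²). Suppose s¹, …, sⁿ : Ω → ℝ are C¹ nonlocal potentials satisfying ∂sⁱ/∂xⁱ = W on Ω for each i (no summation). Then the nonlocal continuity equation assigned to the dilatation φ₄ holds on Ω: Σᵢ ∂/∂xⁱ ( sⁱ − xⁱ·W − u·uᵢ/W + uᵢ·(Σⱼ xʲuⱼ)/W ) = 0. -/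

import Mathlib

open Finset

/-- The partial derivative `∂f/∂xⁱ` of a function on `ℝⁿ`. -/
noncomputable def pd {n : ℕ} (f : EuclideanSpace ℝ (Fin n) → ℝ) (i : Fin n)
    (x : EuclideanSpace ℝ (Fin n)) : ℝ :=
  fderiv ℝ f x (EuclideanSpace.single i 1)

section helpers
variable {n : ℕ} {f g : EuclideanSpace ℝ (Fin n) → ℝ} {x : EuclideanSpace ℝ (Fin n)} {i : Fin n}

lemma pd_of_hasFDerivAt {F : EuclideanSpace ℝ (Fin n) →L[ℝ] ℝ} (h : HasFDerivAt f F x) :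
    pd f i x = F (EuclideanSpace.single i 1) := by rw [pd, h.fderiv]

lemma pd_add (hf : DifferentiableAt ℝ f x) (hg : DifferentiableAt ℝ g x) :
    pd (fun y => f y + g y) i x = pd f i x + pd g i x := by
  simp [pd, fderiv_fun_add hf hg]

lemma pd_sub (hf : DifferentiableAt ℝ f x) (hg : DifferentiableAt ℝ g x) :
    pd (fun y => f y - g y) i x = pd f i x - pd g i x := by
  simp [pd, fderiv_fun_sub hf hg]

lemma pd_const_add (c : ℝ) (hf : DifferentiableAt ℝ f x) :
    pd (fun y => c + f y) i x = pd f i x := by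
  simp [pd, fderiv_const_add]

lemma pd_mul (hf : DifferentiableAt ℝ f x) (hg : DifferentiableAt ℝ g x) :
    pd (fun y => f y * g y) i x = f x * pd g i x + g x * pd f i x := by
  simp [pd, fderiv_fun_mul hf hg]

lemma pd_inv (hg : DifferentiableAt ℝ g x) (hg0 : g x ≠ 0) :
    pd (fun y => (g y)⁻¹) i x = -((g x) ^ 2)⁻¹ * pd g i x := by
  have h : HasFDerivAt (fun y => (g y)⁻¹) (-((g x) ^ 2)⁻¹ • fderiv ℝ g x) x :=
    (hasDerivAt_inv hg0).comp_hasFDerivAt x hg.hasFDerivAt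
  rw [pd_of_hasFDerivAt h]
  simp [pd, smul_eq_mul]

lemma pd_sqrt (hg : DifferentiableAt ℝ g x) (hg0 : g x ≠ 0) :
    pd (fun y => Real.sqrt (g y)) i x = 1 / (2 * Real.sqrt (g x)) * pd g i x := by
  rw [pd_of_hasFDerivAt (hg.hasFDerivAt.sqrt hg0)]
  simp [pd, smul_eq_mul]

lemma pd_sum {f : Fin n → EuclideanSpace ℝ (Fin n) → ℝ}
    (hf : ∀ j, DifferentiableAt ℝ (f j) x) :
    pd (fun y => ∑ j, f j y) i x = ∑ j, pd (f j) i x := by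
  simp [pd, fderiv_fun_sum (fun j _ => hf j)]

lemma pd_coord (j : Fin n) : pd (fun y : EuclideanSpace ℝ (Fin n) => y j) i x
    = if i = j then 1 else 0 := by
  have h : HasFDerivAt (fun y : EuclideanSpace ℝ (Fin n) => y j)
      (EuclideanSpace.proj (𝕜 := ℝ) j) x := (EuclideanSpace.proj (𝕜 := ℝ) j).hasFDerivAt
  rw [pd_of_hasFDerivAt h]
  simp [EuclideanSpace.single_apply, eq_comm]

lemma diff_coord (j : Fin n) : DifferentiableAt ℝ (fun y : EuclideanSpace ℝ (Fin n) => y j) x :=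
  (EuclideanSpace.proj (𝕜 := ℝ) j).differentiableAt

end helpers

lemma pd_sq {n : ℕ} {f : EuclideanSpace ℝ (Fin n) → ℝ} {x : EuclideanSpace ℝ (Fin n)} {i : Fin n}
    (hf : DifferentiableAt ℝ f x) :
    pd (fun y => f y ^ 2) i x = 2 * f x * pd f i x := by
  simp only [pow_two]
  rw [pd_mul hf hf]; ring


set_option maxHeartbeats 2000000 in
/-- The nonlocal continuity equation assigned to the dilatation `φ₄ = u − Σⱼ xʲuⱼ`
for a `C²` solution of the `n`-dimensional minimal surface equation, given
potentials `sⁱ` with `∂sⁱ/∂xⁱ = W` (no summation), where `W = √(1 + |∇u|²)`: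
`Σᵢ Dᵢ( sⁱ − xⁱW − u·uᵢ/W + uᵢ·(Σⱼ xʲuⱼ)/W ) = 0`. -/
theorem dilatation_nonlocal_conservation_law
    (n : ℕ) (hn : 1 ≤ n) (Ω : Set (EuclideanSpace ℝ (Fin n))) (hΩ : IsOpen Ω)
    (u : EuclideanSpace ℝ (Fin n) → ℝ) (hu : ContDiffOn ℝ 2 u Ω)
    (hsol : ∀ x ∈ Ω, (1 + ∑ j, (pd u j x) ^ 2) * (∑ i, pd (pd u i) i x)
        - ∑ i, ∑ j, pd u i x * pd u j x * pd (pd u i) j x = 0)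
    (s : Fin n → EuclideanSpace ℝ (Fin n) → ℝ)
    (hs : ∀ i, ContDiffOn ℝ 1 (s i) Ω)
    (hpot : ∀ i, ∀ x ∈ Ω, pd (s i) i x = Real.sqrt (1 + ∑ j, (pd u j x) ^ 2)) :
    ∀ x ∈ Ω,
      ∑ i, pd (fun y => s i y - y i * Real.sqrt (1 + ∑ j, (pd u j y) ^ 2)
          - u y * pd u i y / Real.sqrt (1 + ∑ j, (pd u j y) ^ 2)
          + pd u i y * (∑ j, y j * pd u j y)
              / Real.sqrt (1 + ∑ k, (pd u k y) ^ 2)) i x = 0 := by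
  intro x hx
  have hmem : Ω ∈ nhds x := hΩ.mem_nhds hx
  have hu2 : ContDiffAt ℝ 2 u x := hu.contDiffAt hmem
  have hud : DifferentiableAt ℝ u x := hu2.differentiableAt two_ne_zero
  have hfd : ContDiffAt ℝ 1 (fderiv ℝ u) x := hu2.fderiv_right (by norm_num)
  have hfdd : DifferentiableAt ℝ (fderiv ℝ u) x := hfd.differentiableAt one_ne_zero
  have hpdC : ∀ j : Fin n, ContDiffAt ℝ 1 (pd u j) x := fun j =>
    hfd.clm_apply contDiffAt_const
  have hdu : ∀ j : Fin n, DifferentiableAt ℝ (pd u j) x := fun j =>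
    (hpdC j).differentiableAt one_ne_zero
  -- symmetry of second derivatives
  have hkey : ∀ k : Fin n, fderiv ℝ (pd u k) x
      = (fderiv ℝ (fderiv ℝ u) x).flip (EuclideanSpace.single k 1) := by
    intro k
    have h := fderiv_clm_apply (c := fderiv ℝ u)
      (u := fun _ => (EuclideanSpace.single k 1 : EuclideanSpace ℝ (Fin n))) hfdd
      (differentiableAt_const _)
    simp [fderiv_fun_const] at h; exact h
  have hqsym : ∀ i j : Fin n, pd (pd u i) j x = pd (pd u j) i x := by
    intro i j
    have hsymm := hu2.isSymmSndFDerivAt (by simp)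
    show fderiv ℝ (pd u i) x (EuclideanSpace.single j 1)
        = fderiv ℝ (pd u j) x (EuclideanSpace.single i 1)
    rw [hkey i, hkey j]
    exact hsymm _ _
  -- basic positivity
  have hg0pos : (0 : ℝ) < 1 + ∑ j, pd u j x ^ 2 := by positivity
  have hg0ne : (1 + ∑ j, pd u j x ^ 2) ≠ 0 := ne_of_gt hg0pos
  have hWpos : (0 : ℝ) < Real.sqrt (1 + ∑ j, pd u j x ^ 2) := Real.sqrt_pos.mpr hg0pos
  have hWne : Real.sqrt (1 + ∑ j, pd u j x ^ 2) ≠ 0 := ne_of_gt hWpos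
  have hWsq : Real.sqrt (1 + ∑ j, pd u j x ^ 2) ^ 2 = 1 + ∑ j, pd u j x ^ 2 :=
    Real.sq_sqrt hg0pos.le
  -- differentiability of the building blocks
  have hdg : DifferentiableAt ℝ (fun y => 1 + ∑ j, pd u j y ^ 2) x :=
    (differentiableAt_const _).add
      (DifferentiableAt.fun_sum fun j _ => (hdu j).pow 2)
  have hdW : DifferentiableAt ℝ (fun y => Real.sqrt (1 + ∑ j, pd u j y ^ 2)) x :=
    hdg.sqrt hg0ne
  have hdWinv : DifferentiableAt ℝ (fun y => (Real.sqrt (1 + ∑ j, pd u j y ^ 2))⁻¹) x :=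
    hdW.inv hWne
  have hdS : DifferentiableAt ℝ (fun y => ∑ j, y j * pd u j y) x :=
    DifferentiableAt.fun_sum fun j _ => (diff_coord j).mul (hdu j)
  -- derivative of the density W
  have hpdg : ∀ i, pd (fun y => 1 + ∑ j, pd u j y ^ 2) i x
      = ∑ j, 2 * pd u j x * pd (pd u j) i x := by
    intro i
    rw [pd_const_add _ (DifferentiableAt.fun_sum fun j _ => (hdu j).fun_pow 2),
      pd_sum fun j => (hdu j).fun_pow 2]
    exact Finset.sum_congr rfl fun j _ => pd_sq (hdu j)
  have hpdW : ∀ i, pd (fun y => Real.sqrt (1 + ∑ j, pd u j y ^ 2)) i x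
      = (∑ j, pd u j x * pd (pd u j) i x) / Real.sqrt (1 + ∑ j, pd u j x ^ 2) := by
    intro i
    rw [pd_sqrt hdg hg0ne, hpdg i]
    have : ∑ j, 2 * pd u j x * pd (pd u j) i x
        = 2 * ∑ j, pd u j x * pd (pd u j) i x := by
      rw [Finset.mul_sum]; exact Finset.sum_congr rfl fun j _ => by ring
    rw [this, one_div, ← div_eq_inv_mul, mul_div_mul_left _ _ (two_ne_zero)]
  have hpdWinv : ∀ i, pd (fun y => (Real.sqrt (1 + ∑ j, pd u j y ^ 2))⁻¹) i x
      = -((Real.sqrt (1 + ∑ j, pd u j x ^ 2)) ^ 2)⁻¹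
        * ((∑ j, pd u j x * pd (pd u j) i x) / Real.sqrt (1 + ∑ j, pd u j x ^ 2)) := by
    intro i
    rw [pd_inv hdW hWne, hpdW i]
  have hpdS : ∀ i, pd (fun y => ∑ j, y j * pd u j y) i x
      = pd u i x + ∑ j, x j * pd (pd u j) i x := by
    intro i
    rw [pd_sum fun j => (diff_coord j).fun_mul (hdu j)]
    have h1 : ∀ j ∈ Finset.univ, pd (fun y => y j * pd u j y) i x
        = x j * pd (pd u j) i x + pd u j x * (if i = j then 1 else 0) := by
      intro j _
      rw [pd_mul (diff_coord j) (hdu j), pd_coord]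
    rw [Finset.sum_congr rfl h1, Finset.sum_add_distrib]
    simp [mul_ite, mul_one, mul_zero, add_comm]
  -- compute each summand
  have hterm : ∀ i ∈ Finset.univ, pd (fun y => s i y
        - y i * Real.sqrt (1 + ∑ j, (pd u j y) ^ 2)
        - u y * pd u i y / Real.sqrt (1 + ∑ j, (pd u j y) ^ 2)
        + pd u i y * (∑ j, y j * pd u j y) / Real.sqrt (1 + ∑ k, (pd u k y) ^ 2)) i x
      = (-(1 / Real.sqrt (1 + ∑ j, pd u j x ^ 2)))
          * (x i * (∑ j, pd u j x * pd (pd u j) i x))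
        + (u x / Real.sqrt (1 + ∑ j, pd u j x ^ 2) ^ 3)
          * (pd u i x * (∑ j, pd u j x * pd (pd u j) i x))
        + (-(u x) / Real.sqrt (1 + ∑ j, pd u j x ^ 2)) * pd (pd u i) i x
        + (-(∑ j, x j * pd u j x) / Real.sqrt (1 + ∑ j, pd u j x ^ 2) ^ 3)
          * (pd u i x * (∑ j, pd u j x * pd (pd u j) i x))
        + (1 / Real.sqrt (1 + ∑ j, pd u j x ^ 2))
          * (pd u i x * (∑ j, x j * pd (pd u j) i x))
        + ((∑ j, x j * pd u j x) / Real.sqrt (1 + ∑ j, pd u j x ^ 2)) * pd (pd u i) i x := by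
    intro i _
    have hds : DifferentiableAt ℝ (s i) x := ((hs i).contDiffAt hmem).differentiableAt one_ne_zero
    have hB : DifferentiableAt ℝ (fun y => y i * Real.sqrt (1 + ∑ j, pd u j y ^ 2)) x :=
      (diff_coord i).mul hdW
    have hC1 : DifferentiableAt ℝ (fun y => u y * pd u i y) x := hud.mul (hdu i)
    have hC : DifferentiableAt ℝ
        (fun y => u y * pd u i y * (Real.sqrt (1 + ∑ j, pd u j y ^ 2))⁻¹) x :=
      hC1.mul hdWinv
    have hD1 : DifferentiableAt ℝ (fun y => pd u i y * ∑ j, y j * pd u j y) x :=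
      (hdu i).mul hdS
    have hD : DifferentiableAt ℝ
        (fun y => pd u i y * (∑ j, y j * pd u j y)
          * (Real.sqrt (1 + ∑ j, pd u j y ^ 2))⁻¹) x := hD1.mul hdWinv
    simp only [div_eq_mul_inv]
    rw [pd_add ((hds.fun_sub hB).fun_sub hC) hD, pd_sub (hds.fun_sub hB) hC, pd_sub hds hB,
      hpot i x hx, pd_mul (diff_coord i) hdW, pd_coord, hpdW i,
      pd_mul hC1 hdWinv, pd_mul hud (hdu i), hpdWinv i,
      pd_mul hD1 hdWinv, pd_mul (hdu i) hdS, hpdS i, hpdWinv i]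
    simp only [if_pos rfl, eq_self_iff_true, if_true]
    have hWne' := hWne
    generalize Real.sqrt (1 + ∑ j, pd u j x ^ 2) = wv at hWne' ⊢
    field_simp
    ring
  rw [Finset.sum_congr rfl hterm]
  -- key identities from the PDE and symmetry of second derivatives
  have k1 : ∑ i, pd u i x * (∑ j, pd u j x * pd (pd u j) i x)
      = (Real.sqrt (1 + ∑ j, pd u j x ^ 2)) ^ 2 * ∑ i, pd (pd u i) i x := by
    have hsol' := hsol x hx
    have h0 : ∑ i, pd u i x * (∑ j, pd u j x * pd (pd u j) i x)
        = ∑ i, ∑ j, pd u i x * (pd u j x * pd (pd u j) i x) :=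
      Finset.sum_congr rfl fun i _ => Finset.mul_sum _ _ _
    have h1 : ∑ i, pd u i x * (∑ j, pd u j x * pd (pd u j) i x)
        = ∑ i, ∑ j, pd u i x * pd u j x * pd (pd u i) j x := by
      rw [h0, Finset.sum_comm]
      apply Finset.sum_congr rfl; intro a _
      apply Finset.sum_congr rfl; intro b _
      ring
    rw [h1, hWsq]
    linarith [hsol']
  have k2 : ∑ i, pd u i x * (∑ j, x j * pd (pd u j) i x)
      = ∑ i, x i * (∑ j, pd u j x * pd (pd u j) i x) := by
    have h1 : ∑ i, pd u i x * (∑ j, x j * pd (pd u j) i x)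
        = ∑ i, ∑ j, pd u i x * (x j * pd (pd u j) i x) := by
      exact Finset.sum_congr rfl fun i _ => Finset.mul_sum _ _ _
    rw [h1, Finset.sum_comm]
    apply Finset.sum_congr rfl; intro i _
    rw [Finset.mul_sum]
    apply Finset.sum_congr rfl; intro j _
    rw [hqsym j i]; ring
  simp only [Finset.sum_add_distrib, ← Finset.mul_sum]
  rw [k1, k2]
  have hWne' := hWne
  generalize Real.sqrt (1 + ∑ j, pd u j x ^ 2) = wv at hWne' ⊢
  field_simp
  ring
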